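/- For every positive integer n, the polynomial (X_1+1)^n · ∏_{q=2}^n (1 + (X_1+1)·X_q) − ∏_{q=2}^n (1 + (X_q+1)·X_1) lies in the ideal of the polynomial ring ℂ[X_1,…,X_n] generated by the symmetric polynomials in X_1,…,X_n with zero constant term. -/

import Mathlib

open MvPolynomial Finset

set_option maxHeartbeats 1000000 in
theorem poly_in_symmetric_ideal (n : ℕ) (hn : 0 < n) :
    ((X (⟨0, hn⟩ : Fin n) + 1) ^ n *
        ∏ q ∈ Finset.univ.filter (fun q : Fin n => q ≠ ⟨0, hn⟩),
          (1 + (X (⟨0, hn⟩ : Fin n) + 1) * X q) -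
      ∏ q ∈ Finset.univ.filter (fun q : Fin n => q ≠ ⟨0, hn⟩),
          (1 + (X q + 1) * X (⟨0, hn⟩ : Fin n)))
    ∈ Ideal.span {p : MvPolynomial (Fin n) ℂ | p.IsSymmetric ∧ constantCoeff p = 0} := by
  classical
  set I : Ideal (MvPolynomial (Fin n) ℂ) :=
    Ideal.span {p : MvPolynomial (Fin n) ℂ | p.IsSymmetric ∧ constantCoeff p = 0} with hI
  set i0 : Fin n := ⟨0, hn⟩
  let π : MvPolynomial (Fin n) ℂ →+* (MvPolynomial (Fin n) ℂ ⧸ I) := Ideal.Quotient.mk I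
  set y : Fin n → (MvPolynomial (Fin n) ℂ ⧸ I) := fun q => π (X q) with hy
  -- esymm is in the ideal for k ≥ 1
  have hesymm : ∀ k : ℕ, k ≠ 0 → π (esymm (Fin n) ℂ k) = 0 := by
    intro k hk
    rw [Ideal.Quotient.eq_zero_iff_mem]
    refine Ideal.subset_span ⟨esymm_isSymmetric _ _ k, ?_⟩
    rw [esymm, map_sum]
    refine Finset.sum_eq_zero fun s hs => ?_
    rw [mem_powersetCard] at hs
    obtain ⟨i, hi⟩ : s.Nonempty := Finset.card_pos.mp (by omega)
    rw [map_prod]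
    exact Finset.prod_eq_zero hi (constantCoeff_X (R := ℂ) i)
  -- Key: for any t, the full product is 1
  have key : ∀ t : MvPolynomial (Fin n) ℂ ⧸ I, ∏ q : Fin n, (1 + t * y q) = 1 := by
    intro t
    have e1 : ∀ q ∈ (univ : Finset (Fin n)), 1 + t * y q = t * y q + 1 :=
      fun q _ => add_comm _ _
    rw [Finset.prod_congr rfl e1, Finset.prod_add]
    have e2 : ∀ s ∈ (univ : Finset (Fin n)).powerset,
        (∏ q ∈ s, (t * y q)) * ∏ q ∈ univ \ s, (1 : MvPolynomial (Fin n) ℂ ⧸ I)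
          = t ^ s.card * ∏ q ∈ s, y q := by
      intro s _
      rw [Finset.prod_const_one, mul_one, Finset.prod_mul_distrib, Finset.prod_const]
    rw [Finset.sum_congr rfl e2, Finset.sum_powerset]
    have e3 : ∀ k ∈ Finset.range ((univ : Finset (Fin n)).card + 1),
        ∑ s ∈ Finset.powersetCard k (univ : Finset (Fin n)), t ^ s.card * ∏ q ∈ s, y q
          = t ^ k * π (esymm (Fin n) ℂ k) := by
      intro k _
      rw [esymm, map_sum, Finset.mul_sum]
      refine Finset.sum_congr rfl fun s hs => ?_
      rw [map_prod, (Finset.mem_powersetCard.mp hs).2]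
    rw [Finset.sum_congr rfl e3]
    rw [Finset.sum_eq_single 0]
    · simp
    · intro k _ hk
      rw [hesymm k hk, mul_zero]
    · intro h
      exact absurd (Finset.mem_range.mpr (Nat.succ_pos _)) h
  -- split off the i0 factor
  have split : ∀ t : MvPolynomial (Fin n) ℂ ⧸ I,
      (1 + t * y i0) * ∏ q ∈ univ.erase i0, (1 + t * y q) = 1 := by
    intro t
    rw [Finset.mul_prod_erase univ (fun q => 1 + t * y q) (Finset.mem_univ i0)]
    exact key t
  -- reduce goal to an identity in the quotient
  rw [← Ideal.Quotient.eq_zero_iff_mem, map_sub, sub_eq_zero]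
  show π _ = π _
  rw [map_mul, map_pow, map_prod, map_prod]
  simp only [map_add, map_mul, map_one]
  rw [Finset.filter_ne']
  set x : MvPolynomial (Fin n) ℂ ⧸ I := π (X i0) with hx
  have hx' : ∀ q, π (X q) = y q := fun q => rfl
  simp only [hx']
  have hxy : x = y i0 := rfl
  -- abbreviations
  set v : MvPolynomial (Fin n) ℂ ⧸ I := ∏ q ∈ univ.erase i0, (1 + y q) with hv
  have hvu : (1 + x) * v = 1 := by
    have h := split 1
    simp only [one_mul] at h
    exact h
  obtain ⟨m, hm⟩ : ∃ m, n = m + 1 := ⟨n - 1, by omega⟩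
  have hcard : (univ.erase i0).card = m := by
    rw [Finset.card_erase_of_mem (Finset.mem_univ i0), Finset.card_univ, Fintype.card_fin]
    omega
  set A1 : MvPolynomial (Fin n) ℂ ⧸ I := ∏ q ∈ univ.erase i0, (1 + (x + 1) * y q) with hA1
  set B : MvPolynomial (Fin n) ℂ ⧸ I := ∏ q ∈ univ.erase i0, (1 + (x * v) * y q) with hB
  have hA1u : (1 + (x + 1) * x) * A1 = 1 := by rw [hxy]; exact split (x + 1)
  have hBu : (1 + (x * v) * x) * B = 1 := by rw [hxy]; exact split (x * v)
  -- RHS equals (1+x)^m * B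
  have hRHS : ∏ q ∈ univ.erase i0, (1 + (y q + 1) * x) = (1 + x) ^ m * B := by
    have e4 : ∀ q ∈ univ.erase i0, 1 + (y q + 1) * x = (1 + x) * (1 + (x * v) * y q) := by
      intro q _
      have : (1 + x) * v = 1 := hvu
      linear_combination (-(x * y q)) * this
    rw [Finset.prod_congr rfl e4, Finset.prod_mul_distrib, Finset.prod_const, hcard]
  have hpow : (x + 1) ^ n = (x + 1) ^ m * (x + 1) := by
    rw [← pow_succ]; congr 1
  rw [hRHS, hpow]
  have e5 : (x + 1) * (1 + (x * v) * x) = 1 + (x + 1) * x := by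
    linear_combination (x * x) * hvu
  calc (x + 1) ^ m * (x + 1) * A1
      = (x + 1) ^ m * (x + 1) * A1 * ((1 + (x * v) * x) * B) := by rw [hBu, mul_one]
    _ = ((x + 1) * (1 + (x * v) * x)) * ((x + 1) ^ m * A1 * B) := by ring
    _ = (1 + (x + 1) * x) * ((x + 1) ^ m * A1 * B) := by rw [e5]
    _ = ((1 + (x + 1) * x) * A1) * ((x + 1) ^ m * B) := by ring
    _ = (1 + x) ^ m * B := by rw [hA1u, one_mul]; ring_nf
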